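/- Let θ > 0, p > 0, T = θ^(2^p), and let y > 0 satisfy θ·y³ − y² + (T+1)·y − 2θ = 0. Let P be the 3×3 matrix with rows (1/(1+θy²+T))·(1, θy², T), (1/(y²+2θ))·(θ, y², θ) and (1/(T+θy²+1))·(T, θy², 1). Then the characteristic polynomial of P is (X − 1)·(X − λ₁)·(X − λ₂), where λ₁ = (T − 2θ² + 1)·y² / (θ·y⁴ + (T + 2θ² + 1)·y² + 2θ(T+1)) and λ₂ = (1 − T)/(T + θ·y² + 1); in particular 1, λ₁ and λ₂ are the eigenvalues of P. -/

import Mathlib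

set_option maxHeartbeats 1000000

/-- for y > 0 solving θ·y³ − y² + (T+1)·y − 2θ = 0, the transition matrix P
(rows (1/(1+θy²+T))·(1, θy², T), (1/(y²+2θ))·(θ, y², θ), (1/(T+θy²+1))·(T, θy², 1)) has
characteristic polynomial (X − 1)(X − λ₁)(X − λ₂) with
λ₁ = (T − 2θ² + 1)y² / (θy⁴ + (T + 2θ² + 1)y² + 2θ(T+1)) and λ₂ = (1 − T)/(T + θy² + 1);
in particular 1, λ₁, λ₂ are the eigenvalues (roots of the characteristic polynomial) of P. -/
theorem stmt_12 (θ p T y l₁ l₂ : ℝ) (P : Matrix (Fin 3) (Fin 3) ℝ)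
    (hθ : 0 < θ) (hp : 0 < p)
    (hT : T = θ ^ ((2 : ℝ) ^ p)) (hy : 0 < y)
    (hroot : θ * y ^ 3 - y ^ 2 + (T + 1) * y - 2 * θ = 0)
    (hP : P = !![1 / (1 + θ * y ^ 2 + T), θ * y ^ 2 / (1 + θ * y ^ 2 + T),
          T / (1 + θ * y ^ 2 + T);
        θ / (y ^ 2 + 2 * θ), y ^ 2 / (y ^ 2 + 2 * θ), θ / (y ^ 2 + 2 * θ);
        T / (T + θ * y ^ 2 + 1), θ * y ^ 2 / (T + θ * y ^ 2 + 1),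
          1 / (T + θ * y ^ 2 + 1)])
    (hl₁ : l₁ = (T - 2 * θ ^ 2 + 1) * y ^ 2 /
      (θ * y ^ 4 + (T + 2 * θ ^ 2 + 1) * y ^ 2 + 2 * θ * (T + 1)))
    (hl₂ : l₂ = (1 - T) / (T + θ * y ^ 2 + 1)) :
    P.charpoly = (Polynomial.X - 1) * (Polynomial.X - Polynomial.C l₁) *
        (Polynomial.X - Polynomial.C l₂) ∧
      P.charpoly.IsRoot 1 ∧ P.charpoly.IsRoot l₁ ∧ P.charpoly.IsRoot l₂ := by
  have hT0 : 0 < T := hT ▸ Real.rpow_pos_of_pos hθ _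
  have hD1 : (1 + θ * y ^ 2 + T) ≠ 0 := by positivity
  have hD2 : (y ^ 2 + 2 * θ) ≠ 0 := by positivity
  have hD3 : (T + θ * y ^ 2 + 1) ≠ 0 := by positivity
  have hD4 : (θ * y ^ 4 + (T + 2 * θ ^ 2 + 1) * y ^ 2 + 2 * θ * (T + 1)) ≠ 0 := by positivity
  have key : P.charpoly = (Polynomial.X - 1) * (Polynomial.X - Polynomial.C l₁) *
      (Polynomial.X - Polynomial.C l₂) := by
    rw [Matrix.charpoly, Matrix.det_fin_three]
    apply Polynomial.funext
    intro r
    simp only [hP, Matrix.charmatrix_apply, Matrix.diagonal_apply, Matrix.map_apply,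
      Matrix.of_apply, Matrix.cons_val', Matrix.cons_val_zero, Matrix.cons_val_one,
      Matrix.head_cons, Matrix.head_fin_const, Matrix.cons_val_fin_one, Matrix.empty_val',
      Matrix.cons_val_two, Matrix.tail_cons, if_true, if_false, Fin.isValue, Fin.reduceEq,
      ite_true, ite_false]
    simp only [Polynomial.eval_mul, Polynomial.eval_sub, Polynomial.eval_add,
      Polynomial.eval_one, Polynomial.eval_X, Polynomial.eval_C, Polynomial.eval_smul,
      Polynomial.eval_neg, Matrix.smul_apply, Matrix.one_apply, smul_eq_mul, Polynomial.eval_zero]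
    rw [hl₁, hl₂]
    field_simp
    ring
  refine ⟨key, ?_, ?_, ?_⟩ <;> rw [key] <;>
    simp [Polynomial.IsRoot, Polynomial.eval_mul]
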